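/- Let d ≥ 1, L > 0, y ∈ ℝ, and let g : [0,1]^d → ℝ be L-Lipschitz with respect to the supremum norm. Let 𝒬 be a finite collection of dyadic cubes of [0,1]^d whose union is [0,1]^d and whose interiors are pairwise disjoint, where a dyadic cube of depth j is a product ∏_{i=1}^d [k_i·2^{-j}, (k_i+1)·2^{-j}] with integers 0 ≤ k_i < 2^j; denote by j_Q the depth of Q and by c_Q its center. Partition 𝒬 into ℐ = {Q : g(c_Q) > y + L·2^{-(j_Q+1)}}, 𝒪 = {Q : g(c_Q) < y − L·2^{-(j_Q+1)}} and 𝒰 = 𝒬 \ (ℐ ∪ 𝒪). Then, with λ the Lebesgue measure on [0,1]^d, the failure probability p = λ({x ∈ [0,1]^d : g(x) < y}) satisfies p⁻ ≤ p ≤ p⁺, where p⁺ = 1 − Σ_{Q∈ℐ} λ(Q) and p⁻ = p⁺ − Σ_{Q∈𝒰} λ(Q); moreover p⁻ = Σ_{Q∈𝒪} λ(Q). -/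
import Mathlib


open Set MeasureTheory

/-- The dyadic cube of depth `j` indexed by `k`, i.e. `∏_i [k_i·2^{-j}, (k_i+1)·2^{-j}]`. -/
def dyadicCube (d j : ℕ) (k : Fin d → ℕ) : Set (Fin d → ℝ) :=
  Set.Icc (fun i => (k i : ℝ) * 2 ^ (-(j : ℤ))) (fun i => ((k i : ℝ) + 1) * 2 ^ (-(j : ℤ)))

/-- The center of the dyadic cube of depth `j` indexed by `k`. -/
noncomputable def dyadicCenter (d j : ℕ) (k : Fin d → ℕ) : Fin d → ℝ :=
  fun i => ((k i : ℝ) + 1 / 2) * 2 ^ (-(j : ℤ))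

lemma dyadic_fin (d j : ℕ) (k : Fin d → ℕ) : volume (dyadicCube d j k) ≠ ⊤ :=
  (isCompact_Icc.measure_lt_top).ne

lemma dyadic_boundary_null (d j : ℕ) (k : Fin d → ℕ) :
    volume (dyadicCube d j k \ interior (dyadicCube d j k)) = 0 := by
  set a : Fin d → ℝ := fun i => (k i : ℝ) * 2 ^ (-(j : ℤ)) with ha
  set b : Fin d → ℝ := fun i => ((k i : ℝ) + 1) * 2 ^ (-(j : ℤ)) with hb
  have hsub : Set.pi Set.univ (fun i => Ioo (a i) (b i)) ⊆ interior (dyadicCube d j k) := by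
    apply interior_maximal
    · rw [show dyadicCube d j k = Icc a b from rfl, ← Set.pi_univ_Icc]
      exact Set.pi_mono fun i _ => Ioo_subset_Icc_self
    · exact isOpen_set_pi Set.finite_univ fun i _ => isOpen_Ioo
  have hae : (Set.pi Set.univ (fun i => Ioo (a i) (b i))) =ᵐ[volume] Icc a b :=
    Measure.univ_pi_Ioo_ae_eq_Icc
  have h0 : volume (Icc a b \ Set.pi Set.univ (fun i => Ioo (a i) (b i))) = 0 :=
    (ae_eq_set.1 hae.symm).1
  refine measure_mono_null ?_ h0
  exact fun x hx => ⟨hx.1, fun h => hx.2 (hsub h)⟩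

lemma dyadic_norm_sub_center {d j : ℕ} {k : Fin d → ℕ} {x : Fin d → ℝ}
    (hx : x ∈ dyadicCube d j k) :
    ‖x - dyadicCenter d j k‖ ≤ 2 ^ (-(j : ℤ) - 1) := by
  have ht : (0:ℝ) < 2 ^ (-(j : ℤ)) := by positivity
  have ht' : (0:ℝ) < 2 ^ (-(j : ℤ) - 1) := by positivity
  have heq : (2:ℝ) ^ (-(j : ℤ) - 1) = 2 ^ (-(j : ℤ)) / 2 := by
    rw [zpow_sub₀ (by norm_num : (2:ℝ) ≠ 0)]; norm_num
  rw [pi_norm_le_iff_of_nonneg ht'.le]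
  intro i
  have h1 := hx.1 i
  have h2 := hx.2 i
  simp only [] at h1 h2
  simp only [Pi.sub_apply, Real.norm_eq_abs, dyadicCenter, abs_le, heq]
  constructor <;> nlinarith [h1, h2]

lemma dyadic_center_mem (d j : ℕ) (k : Fin d → ℕ) :
    dyadicCenter d j k ∈ dyadicCube d j k := by
  have ht : (0:ℝ) < 2 ^ (-(j : ℤ)) := by positivity
  constructor <;> intro i <;> simp only [dyadicCenter] <;>
    [exact mul_le_mul_of_nonneg_right (by norm_num) ht.le;
     exact mul_le_mul_of_nonneg_right (by norm_num) ht.le]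

open Classical in
/-- given a finite partition of `[0,1]^d` into dyadic cubes (with pairwise
disjoint interiors), labelling each cube by a query of `g` at its center yields
deterministic bounds `p⁻ ≤ p ≤ p⁺` on the failure probability
`p = λ({x ∈ [0,1]^d : g x < y})`, where `p⁺ = 1 − Σ_{Q∈ℐ} λ(Q)`,
`p⁻ = p⁺ − Σ_{Q∈𝒰} λ(Q)`, and moreover `p⁻ = Σ_{Q∈𝒪} λ(Q)`. -/
theorem dyadic_bounds_on_failure_probability
    (d : ℕ) (hd : 1 ≤ d) (L y : ℝ) (hL : 0 < L)
    (g : (Fin d → ℝ) → ℝ)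
    (hLip : ∀ x ∈ Icc (0 : Fin d → ℝ) 1, ∀ x' ∈ Icc (0 : Fin d → ℝ) 1,
      |g x - g x'| ≤ L * ‖x - x'‖)
    (ι : Type) (s : Finset ι) (jQ : ι → ℕ) (kQ : ι → Fin d → ℕ)
    (hk : ∀ q ∈ s, ∀ i, kQ q i < 2 ^ jQ q)
    (hcover : (⋃ q ∈ s, dyadicCube d (jQ q) (kQ q)) = Icc (0 : Fin d → ℝ) 1)
    (hdisj : ∀ q ∈ s, ∀ q' ∈ s, q ≠ q' →
      interior (dyadicCube d (jQ q) (kQ q)) ∩ interior (dyadicCube d (jQ q') (kQ q')) = ∅) :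
    (volume {x ∈ Icc (0 : Fin d → ℝ) 1 | g x < y}).toReal ≤
        1 - ∑ q ∈ s.filter
            (fun q => y + L * 2 ^ (-(jQ q : ℤ) - 1) < g (dyadicCenter d (jQ q) (kQ q))),
          (volume (dyadicCube d (jQ q) (kQ q))).toReal
      ∧ (1 - ∑ q ∈ s.filter
            (fun q => y + L * 2 ^ (-(jQ q : ℤ) - 1) < g (dyadicCenter d (jQ q) (kQ q))),
          (volume (dyadicCube d (jQ q) (kQ q))).toReal)
        - ∑ q ∈ s.filter
            (fun q => ¬ y + L * 2 ^ (-(jQ q : ℤ) - 1) < g (dyadicCenter d (jQ q) (kQ q)) ∧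
              ¬ g (dyadicCenter d (jQ q) (kQ q)) < y - L * 2 ^ (-(jQ q : ℤ) - 1)),
          (volume (dyadicCube d (jQ q) (kQ q))).toReal
        ≤ (volume {x ∈ Icc (0 : Fin d → ℝ) 1 | g x < y}).toReal
      ∧ (1 - ∑ q ∈ s.filter
            (fun q => y + L * 2 ^ (-(jQ q : ℤ) - 1) < g (dyadicCenter d (jQ q) (kQ q))),
          (volume (dyadicCube d (jQ q) (kQ q))).toReal)
        - ∑ q ∈ s.filter
            (fun q => ¬ y + L * 2 ^ (-(jQ q : ℤ) - 1) < g (dyadicCenter d (jQ q) (kQ q)) ∧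
              ¬ g (dyadicCenter d (jQ q) (kQ q)) < y - L * 2 ^ (-(jQ q : ℤ) - 1)),
          (volume (dyadicCube d (jQ q) (kQ q))).toReal
        = ∑ q ∈ s.filter
            (fun q => g (dyadicCenter d (jQ q) (kQ q)) < y - L * 2 ^ (-(jQ q : ℤ) - 1)),
          (volume (dyadicCube d (jQ q) (kQ q))).toReal := by
  classical
  set Q : ι → Set (Fin d → ℝ) := fun q => dyadicCube d (jQ q) (kQ q) with hQdef
  set c : ι → (Fin d → ℝ) := fun q => dyadicCenter d (jQ q) (kQ q) with hcdef
  set A : Set (Fin d → ℝ) := {x ∈ Icc (0 : Fin d → ℝ) 1 | g x < y} with hAdef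
  set PI : ι → Prop := fun q => y + L * 2 ^ (-(jQ q : ℤ) - 1) < g (c q) with hPI
  set PO : ι → Prop := fun q => g (c q) < y - L * 2 ^ (-(jQ q : ℤ) - 1) with hPO
  set S : ι → ℝ := fun q => (volume (Q q)).toReal with hS
  -- basic facts
  have hQm : ∀ q, MeasurableSet (Q q) := fun q => measurableSet_Icc
  have hQfin : ∀ q, volume (Q q) ≠ ⊤ := fun q => dyadic_fin _ _ _
  have hIcc1 : volume (Icc (0 : Fin d → ℝ) 1) = 1 := by
    rw [Real.volume_Icc_pi]; simp
  have hQsub : ∀ q ∈ s, Q q ⊆ Icc (0 : Fin d → ℝ) 1 := by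
    intro q hq x hx
    rw [← hcover]
    exact Set.mem_biUnion hq hx
  have hpair : (↑s : Set ι).Pairwise (Function.onFun (AEDisjoint volume) Q) := by
    intro q hq q' hq' hne
    have hb1 := dyadic_boundary_null d (jQ q) (kQ q)
    have hb2 := dyadic_boundary_null d (jQ q') (kQ q')
    have hsub : Q q ∩ Q q' ⊆
        (Q q \ interior (Q q)) ∪ (Q q' \ interior (Q q')) := by
      rintro x ⟨hx, hx'⟩
      by_cases h1 : x ∈ interior (Q q)
      · by_cases h2 : x ∈ interior (Q q')
        · exact absurd (Set.mem_inter h1 h2)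
            (by rw [hdisj q hq q' hq' hne]; exact Set.notMem_empty x)
        · exact Or.inr ⟨hx', h2⟩
      · exact Or.inl ⟨hx, h1⟩
    exact measure_mono_null hsub (measure_union_null hb1 hb2)
  have hmeasU : ∀ (t : Finset ι), t ⊆ s →
      volume (⋃ q ∈ t, Q q) = ∑ q ∈ t, volume (Q q) := by
    intro t ht
    exact measure_biUnion_finset₀ (hpair.mono (Finset.coe_subset.mpr ht))
      (fun q _ => (hQm q).nullMeasurableSet)
  have hsumall : ∑ q ∈ s, volume (Q q) = 1 := by
    rw [← hmeasU s le_rfl, hcover, hIcc1]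
  have hsum_toReal : ∀ (t : Finset ι),
      (∑ q ∈ t, volume (Q q)).toReal = ∑ q ∈ t, S q := by
    intro t
    exact ENNReal.toReal_sum fun q _ => hQfin q
  have hsumallR : ∑ q ∈ s, S q = 1 := by
    rw [← hsum_toReal, hsumall, ENNReal.toReal_one]
  have hsum_le_one : ∀ (t : Finset ι), t ⊆ s → ∑ q ∈ t, volume (Q q) ≤ 1 := by
    intro t ht
    rw [← hsumall]
    exact Finset.sum_le_sum_of_subset ht
  -- pointwise consequences of Lipschitz
  have hlip_bound : ∀ q ∈ s, ∀ x ∈ Q q,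
      |g x - g (c q)| ≤ L * 2 ^ (-(jQ q : ℤ) - 1) := by
    intro q hq x hx
    have hxI : x ∈ Icc (0 : Fin d → ℝ) 1 := hQsub q hq hx
    have hcI : c q ∈ Icc (0 : Fin d → ℝ) 1 := hQsub q hq (dyadic_center_mem _ _ _)
    calc |g x - g (c q)| ≤ L * ‖x - c q‖ := hLip x hxI (c q) hcI
    _ ≤ L * 2 ^ (-(jQ q : ℤ) - 1) :=
        mul_le_mul_of_nonneg_left (dyadic_norm_sub_center hx) hL.le
  have hInner : ∀ q ∈ s, PI q → ∀ x ∈ Q q, y < g x := by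
    intro q hq hPIq x hx
    have h := abs_le.1 (hlip_bound q hq x hx)
    have := hPIq
    simp only [hPI] at this
    linarith [h.2]
  have hOuter : ∀ q ∈ s, PO q → ∀ x ∈ Q q, g x < y := by
    intro q hq hPOq x hx
    have h := abs_le.1 (hlip_bound q hq x hx)
    have := hPOq
    simp only [hPO] at this
    linarith [h.1]
  -- upper bound
  have hAsub : A ⊆ Icc (0 : Fin d → ℝ) 1 \ ⋃ q ∈ s.filter PI, Q q := by
    rintro x ⟨hx1, hx2⟩
    refine ⟨hx1, ?_⟩
    intro hmem
    simp only [Set.mem_iUnion, exists_prop] at hmem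
    obtain ⟨q, hq, hxq⟩ := hmem
    rw [Finset.mem_filter] at hq
    exact absurd hx2 (not_lt.2 (hInner q hq.1 hq.2 x hxq).le)
  have hAfin : volume A ≠ ⊤ := by
    refine ne_top_of_le_ne_top (by rw [hIcc1]; exact ENNReal.one_ne_top)
      (measure_mono ?_)
    exact fun x hx => hx.1
  have hub : (volume A).toReal ≤ 1 - ∑ q ∈ s.filter PI, S q := by
    have hBsub : (⋃ q ∈ s.filter PI, Q q) ⊆ Icc (0 : Fin d → ℝ) 1 := by
      refine Set.iUnion₂_subset fun q hq => hQsub q (Finset.mem_of_mem_filter q hq)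
    have hBvol := hmeasU (s.filter PI) (Finset.filter_subset _ _)
    have hBfin : volume (⋃ q ∈ s.filter PI, Q q) ≠ ⊤ := by
      rw [hBvol]; exact (ENNReal.sum_lt_top.2 fun q _ => (hQfin q).lt_top).ne
    have h1 : volume A ≤ 1 - ∑ q ∈ s.filter PI, volume (Q q) := by
      calc volume A ≤ volume (Icc (0 : Fin d → ℝ) 1 \ ⋃ q ∈ s.filter PI, Q q) :=
            measure_mono hAsub
      _ = volume (Icc (0 : Fin d → ℝ) 1) - volume (⋃ q ∈ s.filter PI, Q q) :=
            measure_diff hBsub ((MeasurableSet.biUnion (Finset.countable_toSet _)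
              (fun q _ => hQm q)).nullMeasurableSet) hBfin
      _ = 1 - ∑ q ∈ s.filter PI, volume (Q q) := by rw [hIcc1, hBvol]
    have h2 := ENNReal.toReal_mono (by
        refine ne_top_of_le_ne_top ENNReal.one_ne_top tsub_le_self) h1
    rwa [ENNReal.toReal_sub_of_le (hsum_le_one _ (Finset.filter_subset _ _))
      ENNReal.one_ne_top, ENNReal.toReal_one, hsum_toReal] at h2
  -- lower bound
  have hlb : ∑ q ∈ s.filter PO, S q ≤ (volume A).toReal := by
    have hOsub : (⋃ q ∈ s.filter PO, Q q) ⊆ A := by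
      refine Set.iUnion₂_subset fun q hq x hx => ?_
      rw [Finset.mem_filter] at hq
      exact ⟨hQsub q hq.1 hx, hOuter q hq.1 hq.2 x hx⟩
    have h1 : ∑ q ∈ s.filter PO, volume (Q q) ≤ volume A := by
      rw [← hmeasU (s.filter PO) (Finset.filter_subset _ _)]
      exact measure_mono hOsub
    have h2 := ENNReal.toReal_mono hAfin h1
    rwa [hsum_toReal] at h2
  -- partition identity
  have hPO_imp : ∀ q, PO q → ¬ PI q := by
    intro q h h'
    have ht : (0:ℝ) < L * 2 ^ (-(jQ q : ℤ) - 1) := by positivity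
    simp only [hPO] at h
    simp only [hPI] at h'
    linarith
  have hsplit1 : ∑ q ∈ s.filter PI, S q + ∑ q ∈ s.filter (fun q => ¬ PI q), S q
      = ∑ q ∈ s, S q := Finset.sum_filter_add_sum_filter_not s PI S
  have hsplit2 : ∑ q ∈ (s.filter (fun q => ¬ PI q)).filter PO, S q
      + ∑ q ∈ (s.filter (fun q => ¬ PI q)).filter (fun q => ¬ PO q), S q
      = ∑ q ∈ s.filter (fun q => ¬ PI q), S q :=
    Finset.sum_filter_add_sum_filter_not _ PO S
  have he1 : (s.filter (fun q => ¬ PI q)).filter PO = s.filter PO := by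
    rw [Finset.filter_filter]
    exact Finset.filter_congr fun q hq => by
      constructor
      · exact fun h => h.2
      · exact fun h => ⟨hPO_imp q h, h⟩
  have he2 : (s.filter (fun q => ¬ PI q)).filter (fun q => ¬ PO q)
      = s.filter (fun q => ¬ PI q ∧ ¬ PO q) := by
    rw [Finset.filter_filter]
  rw [he1, he2] at hsplit2
  rw [hsumallR] at hsplit1
  have hkey : (1 - ∑ q ∈ s.filter PI, S q) - ∑ q ∈ s.filter (fun q => ¬ PI q ∧ ¬ PO q), S q
      = ∑ q ∈ s.filter PO, S q := by linarith
  exact ⟨hub, by rw [hkey]; exact hlb, hkey⟩
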